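/- Let c < 0 and κ < 0 be real numbers with κ² + 4c > 0, and define u : ℝ → ℝ by u(s) = c^(−1)·( κ − √(κ² + 4c)·cos(√(−c)·s) ). Then u(s) > 0 for all s, u is periodic with period 2π/√(−c), and u satisfies the differential equation (u′(s))² = c·u(s)² − 2κ·u(s) − 4 for all s ∈ ℝ. -/

import Mathlib

open Real

/-- Let `c < 0` and `κ < 0` with `κ² + 4c > 0`, and let
`u(s) = c⁻¹·(κ − √(κ² + 4c)·cos(√(−c)·s))`. Then `u > 0` everywhere, `u` is periodic
with period `2π/√(−c)`, and `(u′)² = c·u² − 2κ·u − 4`. -/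
theorem stmt14 (c κ : ℝ) (hc : c < 0) (hκ : κ < 0) (hd : 0 < κ ^ 2 + 4 * c) (u : ℝ → ℝ)
    (hu : ∀ s : ℝ,
      u s = c⁻¹ * (κ - Real.sqrt (κ ^ 2 + 4 * c) * Real.cos (Real.sqrt (-c) * s))) :
    (∀ s : ℝ, 0 < u s)
    ∧ Function.Periodic u (2 * π / Real.sqrt (-c))
    ∧ ∀ s : ℝ, (deriv u s) ^ 2 = c * u s ^ 2 - 2 * κ * u s - 4 := by
  set A := Real.sqrt (κ ^ 2 + 4 * c) with hAdef
  set b := Real.sqrt (-c) with hbdef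
  have hb : 0 < b := Real.sqrt_pos.mpr (by linarith)
  have hb2 : b ^ 2 = -c := Real.sq_sqrt (by linarith)
  have hA2 : A ^ 2 = κ ^ 2 + 4 * c := Real.sq_sqrt hd.le
  have hApos : 0 < A := Real.sqrt_pos.mpr hd
  have hAκ : A < -κ := by
    have h1 : A < Real.sqrt (κ ^ 2) := Real.sqrt_lt_sqrt hd.le (by linarith)
    rwa [Real.sqrt_sq_eq_abs, abs_of_neg hκ] at h1
  have hcinv : c⁻¹ < 0 := inv_neg''.mpr hc
  refine ⟨?_, ?_, ?_⟩
  · intro s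
    rw [hu s]
    have h1 := Real.neg_one_le_cos (b * s)
    have h2 : κ - A * Real.cos (b * s) < 0 := by nlinarith
    exact mul_pos_of_neg_of_neg hcinv h2
  · intro s
    rw [hu, hu]
    have : b * (s + 2 * π / b) = b * s + 2 * π := by field_simp
    rw [this, Real.cos_add_two_pi]
  · intro s
    have hud : u = fun s => c⁻¹ * (κ - A * Real.cos (b * s)) := funext hu
    have hder : HasDerivAt u (c⁻¹ * (A * (Real.sin (b * s) * b))) s := by
      rw [hud]
      have h1 : HasDerivAt (fun s : ℝ => b * s) b s := by
        simpa using (hasDerivAt_id s).const_mul b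
      have h2 : HasDerivAt (fun s : ℝ => Real.cos (b * s)) (-Real.sin (b * s) * b) s :=
        (Real.hasDerivAt_cos (b * s)).comp s h1
      have h3 := ((hasDerivAt_const s κ).sub (h2.const_mul A)).const_mul c⁻¹
      exact h3.congr_deriv (by ring)
    rw [hder.deriv, hu s]
    have hsc := Real.sin_sq_add_cos_sq (b * s)
    have hcne : c ≠ 0 := hc.ne
    field_simp
    linear_combination (-c) * hA2 + (A^2 * Real.sin (b*s)^2) * hb2 + (-c * A^2) * hsc
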